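/- arXiv:math/0701837 — 2 statements merged into one kernel-verified Lean document; each statement's English description precedes it below -/
import Mathlib

section
/- The double bracket on the free algebra ℂ⟨x,y⟩ determined by ⟪x,x⟫ = 0, ⟪y,y⟫ = 0, ⟪x,y⟫ = x⊗x, and ⟪y,x⟫ = −x⊗x, extended so as to be a derivation in its second argument for the outer bimodule structure and satisfying ⟪a,b⟫ = −⟪b,a⟫^op, satisfies the double Jacobi identity: for all a,b,c in ℂ⟨x,y⟩, ⟪a,⟪b,c⟫'⟫ ⊗ ⟪b,c⟫'' + σ-cyclic terms (i.e., Σ over cyclic permutations with the appropriate tensor factor permutations) vanish in A⊗A⊗A. -/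
open TensorProduct

set_option maxHeartbeats 1000000
set_option synthInstance.maxHeartbeats 400000

noncomputable section

abbrev A2 := FreeAlgebra ℂ (Fin 2)

def Xg : A2 := FreeAlgebra.ι ℂ 0
def Yg : A2 := FreeAlgebra.ι ℂ 1

/-- Apply `B a` to the first tensor factor: `u ⊗ v ↦ ⟪a,u⟫ ⊗ v ∈ A⊗A⊗A`. -/
def Tfst (B : A2 →ₗ[ℂ] A2 →ₗ[ℂ] A2 ⊗[ℂ] A2) (a : A2) :
    A2 ⊗[ℂ] A2 →ₗ[ℂ] A2 ⊗[ℂ] (A2 ⊗[ℂ] A2) :=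
  (TensorProduct.assoc ℂ A2 A2 A2).toLinearMap ∘ₗ TensorProduct.map (B a) LinearMap.id

/-- The cyclic permutation `τ_{(123)} : u⊗v⊗w ↦ w⊗u⊗v`. -/
def cyc : A2 ⊗[ℂ] (A2 ⊗[ℂ] A2) →ₗ[ℂ] A2 ⊗[ℂ] (A2 ⊗[ℂ] A2) :=
  (TensorProduct.comm ℂ (A2 ⊗[ℂ] A2) A2).toLinearMap ∘ₗ
    (TensorProduct.assoc ℂ A2 A2 A2).symm.toLinearMap

instance tripleNUNA : NonUnitalNonAssocSemiring (A2 ⊗[ℂ] (A2 ⊗[ℂ] A2)) :=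
  Algebra.TensorProduct.instNonUnitalNonAssocSemiring

@[simp] lemma cyc_tmul (u v w : A2) :
    cyc (u ⊗ₜ[ℂ] (v ⊗ₜ[ℂ] w)) = w ⊗ₜ[ℂ] (u ⊗ₜ[ℂ] v) := by
  simp [cyc]

lemma Tfst_tmul (B : A2 →ₗ[ℂ] A2 →ₗ[ℂ] A2 ⊗[ℂ] A2) (a u v : A2) :
    Tfst B a (u ⊗ₜ[ℂ] v) = (TensorProduct.assoc ℂ A2 A2 A2) ((B a u) ⊗ₜ[ℂ] v) := by
  simp [Tfst]

lemma comm_mul (s t : A2 ⊗[ℂ] A2) :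
    (TensorProduct.comm ℂ A2 A2) (s * t)
      = (TensorProduct.comm ℂ A2 A2) s * (TensorProduct.comm ℂ A2 A2) t := by
  induction s using TensorProduct.induction_on with
  | zero => simp
  | add s₁ s₂ h1 h2 => simp [add_mul, h1, h2]
  | tmul u v =>
    induction t using TensorProduct.induction_on with
    | zero => simp
    | add t₁ t₂ h1 h2 => simp [mul_add, h1, h2]
    | tmul p q => simp [Algebra.TensorProduct.tmul_mul_tmul]

lemma cyc_mul (s t : A2 ⊗[ℂ] (A2 ⊗[ℂ] A2)) : cyc (s * t) = cyc s * cyc t := by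
  induction s using TensorProduct.induction_on with
  | zero => simp
  | add s₁ s₂ h1 h2 => simp [add_mul, h1, h2]
  | tmul u p =>
    induction p using TensorProduct.induction_on with
    | zero => simp
    | add p₁ p₂ h1 h2 => simp only [tmul_add, add_mul, map_add, h1, h2]
    | tmul v w =>
      induction t using TensorProduct.induction_on with
      | zero => simp
      | add t₁ t₂ h1 h2 => simp only [mul_add, map_add, h1, h2]
      | tmul u' q =>
        induction q using TensorProduct.induction_on with
        | zero => simp
        | add q₁ q₂ h1 h2 => simp only [tmul_add, mul_add, map_add, h1, h2]
        | tmul v' w' => simp [Algebra.TensorProduct.tmul_mul_tmul]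

lemma cyc3 (t : A2 ⊗[ℂ] (A2 ⊗[ℂ] A2)) : cyc (cyc (cyc t)) = t := by
  induction t using TensorProduct.induction_on with
  | zero => simp
  | add t₁ t₂ h1 h2 => simp only [map_add, h1, h2]
  | tmul u p =>
    induction p using TensorProduct.induction_on with
    | zero => simp
    | add p₁ p₂ h1 h2 => simp only [tmul_add, map_add, h1, h2]
    | tmul v w => simp

lemma H1 (s : A2 ⊗[ℂ] A2) (v d : A2) :
    (TensorProduct.assoc ℂ A2 A2 A2) (s ⊗ₜ[ℂ] (v * d))
      = (TensorProduct.assoc ℂ A2 A2 A2) (s ⊗ₜ[ℂ] v) * ((1:A2) ⊗ₜ[ℂ] ((1:A2) ⊗ₜ[ℂ] d)) := by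
  induction s using TensorProduct.induction_on with
  | zero => simp
  | add s₁ s₂ h1 h2 => simp only [add_tmul, map_add, add_mul, h1, h2]
  | tmul p q => simp [Algebra.TensorProduct.tmul_mul_tmul]

lemma H2 (s : A2 ⊗[ℂ] A2) (v c : A2) :
    (TensorProduct.assoc ℂ A2 A2 A2) (((c ⊗ₜ[ℂ] (1:A2)) * s) ⊗ₜ[ℂ] v)
      = (c ⊗ₜ[ℂ] ((1:A2) ⊗ₜ[ℂ] (1:A2))) * (TensorProduct.assoc ℂ A2 A2 A2) (s ⊗ₜ[ℂ] v) := by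
  induction s using TensorProduct.induction_on with
  | zero => simp
  | add s₁ s₂ h1 h2 => simp only [mul_add, add_tmul, map_add, h1, h2]
  | tmul p q => simp [Algebra.TensorProduct.tmul_mul_tmul]

lemma H3 (s : A2 ⊗[ℂ] A2) (v c : A2) :
    (TensorProduct.assoc ℂ A2 A2 A2) ((((1:A2) ⊗ₜ[ℂ] c) * s) ⊗ₜ[ℂ] v)
      = ((1:A2) ⊗ₜ[ℂ] (c ⊗ₜ[ℂ] (1:A2))) * (TensorProduct.assoc ℂ A2 A2 A2) (s ⊗ₜ[ℂ] v) := by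
  induction s using TensorProduct.induction_on with
  | zero => simp
  | add s₁ s₂ h1 h2 => simp only [mul_add, add_tmul, map_add, h1, h2]
  | tmul p q => simp [Algebra.TensorProduct.tmul_mul_tmul]

lemma H4 (s : A2 ⊗[ℂ] A2) (v d : A2) :
    (TensorProduct.assoc ℂ A2 A2 A2) ((s * (d ⊗ₜ[ℂ] (1:A2))) ⊗ₜ[ℂ] v)
      = (TensorProduct.assoc ℂ A2 A2 A2) (s ⊗ₜ[ℂ] v) * (d ⊗ₜ[ℂ] ((1:A2) ⊗ₜ[ℂ] (1:A2))) := by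
  induction s using TensorProduct.induction_on with
  | zero => simp
  | add s₁ s₂ h1 h2 => simp only [add_mul, add_tmul, map_add, h1, h2]
  | tmul p q => simp [Algebra.TensorProduct.tmul_mul_tmul]

lemma H5 (s : A2 ⊗[ℂ] A2) (v d : A2) :
    (TensorProduct.assoc ℂ A2 A2 A2) ((s * ((1:A2) ⊗ₜ[ℂ] d)) ⊗ₜ[ℂ] v)
      = (TensorProduct.assoc ℂ A2 A2 A2) (s ⊗ₜ[ℂ] v) * ((1:A2) ⊗ₜ[ℂ] (d ⊗ₜ[ℂ] (1:A2))) := by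
  induction s using TensorProduct.induction_on with
  | zero => simp
  | add s₁ s₂ h1 h2 => simp only [add_mul, add_tmul, map_add, h1, h2]
  | tmul p q => simp [Algebra.TensorProduct.tmul_mul_tmul]

lemma H6 (s : A2 ⊗[ℂ] A2) (v c : A2) :
    (TensorProduct.assoc ℂ A2 A2 A2) (s ⊗ₜ[ℂ] (c * v))
      = ((1:A2) ⊗ₜ[ℂ] ((1:A2) ⊗ₜ[ℂ] c)) * (TensorProduct.assoc ℂ A2 A2 A2) (s ⊗ₜ[ℂ] v) := by
  induction s using TensorProduct.induction_on with
  | zero => simp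
  | add s₁ s₂ h1 h2 => simp only [add_tmul, map_add, mul_add, add_mul, h1, h2]
  | tmul p q => simp [Algebra.TensorProduct.tmul_mul_tmul]

def Kmap (e : A2 ⊗[ℂ] A2) : A2 ⊗[ℂ] A2 →ₗ[ℂ] A2 ⊗[ℂ] (A2 ⊗[ℂ] A2) :=
  (TensorProduct.assoc ℂ A2 A2 A2).toLinearMap ∘ₗ
    TensorProduct.map (LinearMap.mulLeft ℂ e ∘ₗ TensorProduct.mk ℂ A2 A2 1) LinearMap.id

lemma Kmap_tmul (e : A2 ⊗[ℂ] A2) (u v : A2) :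
    Kmap e (u ⊗ₜ[ℂ] v)
      = (TensorProduct.assoc ℂ A2 A2 A2) ((e * ((1:A2) ⊗ₜ[ℂ] u)) ⊗ₜ[ℂ] v) := by
  simp [Kmap]

def Lmap (e : A2 ⊗[ℂ] A2) : A2 ⊗[ℂ] A2 →ₗ[ℂ] A2 ⊗[ℂ] (A2 ⊗[ℂ] A2) :=
  (TensorProduct.assoc ℂ A2 A2 A2).toLinearMap ∘ₗ
    TensorProduct.map (LinearMap.mulRight ℂ e ∘ₗ (TensorProduct.mk ℂ A2 A2).flip 1) LinearMap.id

lemma Lmap_tmul (e : A2 ⊗[ℂ] A2) (u v : A2) :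
    Lmap e (u ⊗ₜ[ℂ] v)
      = (TensorProduct.assoc ℂ A2 A2 A2) (((u ⊗ₜ[ℂ] (1:A2)) * e) ⊗ₜ[ℂ] v) := by
  simp [Lmap]

lemma Kmap_neg (e : A2 ⊗[ℂ] A2) (t : A2 ⊗[ℂ] A2) : Kmap (-e) t = - Kmap e t := by
  induction t using TensorProduct.induction_on with
  | zero => simp
  | add t₁ t₂ h1 h2 => simp only [map_add, h1, h2, neg_add]
  | tmul u v => rw [Kmap_tmul, Kmap_tmul, neg_mul e ((1:A2) ⊗ₜ[ℂ] u), ← map_neg]; congr 1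

lemma Kmap_add (e₁ e₂ : A2 ⊗[ℂ] A2) (t : A2 ⊗[ℂ] A2) :
    Kmap (e₁ + e₂) t = Kmap e₁ t + Kmap e₂ t := by
  induction t using TensorProduct.induction_on with
  | zero => simp
  | add t₁ t₂ h1 h2 => simp only [map_add, h1, h2]; abel
  | tmul u v => simp [Kmap_tmul, add_mul, add_tmul]

lemma Kmap_zero (t : A2 ⊗[ℂ] A2) : Kmap 0 t = 0 := by
  induction t using TensorProduct.induction_on with
  | zero => simp
  | add t₁ t₂ h1 h2 => simp [h1, h2]
  | tmul u v => simp [Kmap_tmul]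

lemma E6 (e s : A2 ⊗[ℂ] A2) :
    cyc (Lmap e s) = Kmap ((TensorProduct.comm ℂ A2 A2) s) e := by
  induction s using TensorProduct.induction_on with
  | zero => simp [Kmap_zero]
  | add s₁ s₂ h1 h2 => simp only [map_add, h1, h2, Kmap_add]
  | tmul u v =>
    induction e using TensorProduct.induction_on with
    | zero => simp [Lmap_tmul]
    | add e₁ e₂ h1 h2 =>
        have hL : Lmap (e₁ + e₂) (u ⊗ₜ[ℂ] v) = Lmap e₁ (u ⊗ₜ[ℂ] v) + Lmap e₂ (u ⊗ₜ[ℂ] v) := by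
          simp [Lmap_tmul, mul_add, add_tmul]
        rw [hL, map_add, h1, h2, ← map_add]
    | tmul p q =>
        simp [Lmap_tmul, Kmap_tmul, Algebra.TensorProduct.tmul_mul_tmul]

lemma tneg_mul' (x y : A2 ⊗[ℂ] A2) : -x * y = -(x * y) := by
  induction x using TensorProduct.induction_on with
  | zero => simp
  | add x₁ x₂ h1 h2 => rw [neg_add, add_mul, h1, h2, add_mul, neg_add]
  | tmul p q =>
    induction y using TensorProduct.induction_on with
    | zero => simp
    | add y₁ y₂ h1 h2 => rw [mul_add, h1, h2, mul_add, neg_add]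
    | tmul r s =>
      rw [← neg_tmul, Algebra.TensorProduct.tmul_mul_tmul,
        Algebra.TensorProduct.tmul_mul_tmul, neg_mul, neg_tmul]

lemma tmul_neg' (x y : A2 ⊗[ℂ] A2) : x * -y = -(x * y) := by
  induction x using TensorProduct.induction_on with
  | zero => simp
  | add x₁ x₂ h1 h2 => rw [add_mul, h1, h2, add_mul, neg_add]
  | tmul p q =>
    induction y using TensorProduct.induction_on with
    | zero => simp
    | add y₁ y₂ h1 h2 => rw [neg_add, mul_add, h1, h2, mul_add, neg_add]
    | tmul r s =>
      rw [← neg_tmul, Algebra.TensorProduct.tmul_mul_tmul,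
        Algebra.TensorProduct.tmul_mul_tmul, mul_neg, neg_tmul]

section Exp

variable (B : A2 →ₗ[ℂ] A2 →ₗ[ℂ] A2 ⊗[ℂ] A2)
variable (hder : ∀ a b c : A2, B a (b * c)
      = (b ⊗ₜ[ℂ] (1 : A2)) * B a c + B a b * ((1 : A2) ⊗ₜ[ℂ] c))
variable (hskew : ∀ a b : A2, B a b = - (TensorProduct.comm ℂ A2 A2) (B b a))

include hder in
lemma B_one (a : A2) : B a 1 = 0 := by
  have h := hder a 1 1
  rw [← Algebra.TensorProduct.one_def, one_mul, mul_one, one_mul] at h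
  have := add_left_cancel (a := B a 1) (b := 0) (c := B a 1) (by rw [add_zero, ← h])
  exact this.symm

include hder hskew in
lemma one_B (a : A2) : B 1 a = 0 := by
  rw [hskew 1 a, B_one B hder, map_zero, neg_zero]

include hder hskew in
lemma D2 (c d u : A2) :
    B (c * d) u = ((1:A2) ⊗ₜ[ℂ] c) * B d u + B c u * (d ⊗ₜ[ℂ] (1:A2)) := by
  rw [hskew (c * d) u, hder u c d, map_add, neg_add, comm_mul, comm_mul]
  rw [show (TensorProduct.comm ℂ A2 A2) (c ⊗ₜ[ℂ] (1:A2)) = (1:A2) ⊗ₜ[ℂ] c from rfl,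
      show (TensorProduct.comm ℂ A2 A2) ((1:A2) ⊗ₜ[ℂ] d) = d ⊗ₜ[ℂ] (1:A2) from rfl]
  have h1 : (TensorProduct.comm ℂ A2 A2) (B u d) = - B d u := by
    rw [hskew d u, neg_neg]
  have h2 : (TensorProduct.comm ℂ A2 A2) (B u c) = - B c u := by
    rw [hskew c u, neg_neg]
  rw [h1, h2, tmul_neg', tneg_mul', neg_neg, neg_neg]

-- E1 : right action by 1 ⊗ d
lemma E1 (a d : A2) (t : A2 ⊗[ℂ] A2) :
    Tfst B a (t * ((1:A2) ⊗ₜ[ℂ] d))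
      = Tfst B a t * ((1:A2) ⊗ₜ[ℂ] ((1:A2) ⊗ₜ[ℂ] d)) := by
  induction t using TensorProduct.induction_on with
  | zero => simp
  | add t₁ t₂ h1 h2 => simp only [add_mul, map_add, h1, h2]
  | tmul u v =>
      rw [show (u ⊗ₜ[ℂ] v) * ((1:A2) ⊗ₜ[ℂ] d) = u ⊗ₜ[ℂ] (v * d) by
        simp [Algebra.TensorProduct.tmul_mul_tmul]]
      rw [Tfst_tmul, Tfst_tmul, H1]

include hder in
lemma E2 (a c : A2) (t : A2 ⊗[ℂ] A2) :
    Tfst B a ((c ⊗ₜ[ℂ] (1:A2)) * t)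
      = (c ⊗ₜ[ℂ] ((1:A2) ⊗ₜ[ℂ] (1:A2))) * Tfst B a t + Kmap (B a c) t := by
  induction t using TensorProduct.induction_on with
  | zero => simp
  | add t₁ t₂ h1 h2 =>
      rw [mul_add, map_add, h1, h2, map_add, mul_add, map_add]
      abel
  | tmul u v =>
      rw [show (c ⊗ₜ[ℂ] (1:A2)) * (u ⊗ₜ[ℂ] v) = (c * u) ⊗ₜ[ℂ] v by
        simp [Algebra.TensorProduct.tmul_mul_tmul]]
      rw [Tfst_tmul, hder a c u, add_tmul, map_add, H2, Kmap_tmul, Tfst_tmul]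

lemma E3 (b c : A2) (t : A2 ⊗[ℂ] A2) :
    Tfst B b (((1:A2) ⊗ₜ[ℂ] c) * t)
      = ((1:A2) ⊗ₜ[ℂ] ((1:A2) ⊗ₜ[ℂ] c)) * Tfst B b t := by
  induction t using TensorProduct.induction_on with
  | zero => simp
  | add t₁ t₂ h1 h2 => simp only [mul_add, map_add, h1, h2]
  | tmul u v =>
      rw [show ((1:A2) ⊗ₜ[ℂ] c) * (u ⊗ₜ[ℂ] v) = u ⊗ₜ[ℂ] (c * v) by
        simp [Algebra.TensorProduct.tmul_mul_tmul]]
      rw [Tfst_tmul, Tfst_tmul, H6]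

include hder in
lemma E4 (b d : A2) (t : A2 ⊗[ℂ] A2) :
    Tfst B b (t * (d ⊗ₜ[ℂ] (1:A2)))
      = Lmap (B b d) t + Tfst B b t * ((1:A2) ⊗ₜ[ℂ] (d ⊗ₜ[ℂ] (1:A2))) := by
  induction t using TensorProduct.induction_on with
  | zero => simp
  | add t₁ t₂ h1 h2 =>
      rw [add_mul, map_add, h1, h2, map_add, map_add, add_mul]
      abel
  | tmul u v =>
      rw [show (u ⊗ₜ[ℂ] v) * (d ⊗ₜ[ℂ] (1:A2)) = (u * d) ⊗ₜ[ℂ] v by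
        simp [Algebra.TensorProduct.tmul_mul_tmul]]
      rw [Tfst_tmul, hder b u d, add_tmul, map_add, Lmap_tmul, H5, Tfst_tmul]

include hder hskew in
lemma E5 (c d : A2) (t : A2 ⊗[ℂ] A2) :
    Tfst B (c * d) t
      = ((1:A2) ⊗ₜ[ℂ] (c ⊗ₜ[ℂ] (1:A2))) * Tfst B d t
        + Tfst B c t * (d ⊗ₜ[ℂ] ((1:A2) ⊗ₜ[ℂ] (1:A2))) := by
  induction t using TensorProduct.induction_on with
  | zero => simp
  | add t₁ t₂ h1 h2 =>
      rw [map_add, h1, h2, map_add, map_add, mul_add, add_mul]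
      abel
  | tmul u v =>
      rw [Tfst_tmul, D2 B hder hskew c d u, add_tmul, map_add, H3, H4, Tfst_tmul, Tfst_tmul]

end Exp

def Jex (B : A2 →ₗ[ℂ] A2 →ₗ[ℂ] A2 ⊗[ℂ] A2) (a b c : A2) : A2 ⊗[ℂ] (A2 ⊗[ℂ] A2) :=
  Tfst B a (B b c) + cyc (Tfst B b (B c a)) + cyc (cyc (Tfst B c (B a b)))

section JexProps

variable (B : A2 →ₗ[ℂ] A2 →ₗ[ℂ] A2 ⊗[ℂ] A2)
variable (hder : ∀ a b c : A2, B a (b * c)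
      = (b ⊗ₜ[ℂ] (1 : A2)) * B a c + B a b * ((1 : A2) ⊗ₜ[ℂ] c))
variable (hskew : ∀ a b : A2, B a b = - (TensorProduct.comm ℂ A2 A2) (B b a))

lemma Tfst_add_fst (c c' : A2) (t : A2 ⊗[ℂ] A2) :
    Tfst B (c + c') t = Tfst B c t + Tfst B c' t := by
  induction t using TensorProduct.induction_on with
  | zero => simp
  | add t₁ t₂ h1 h2 => rw [map_add, h1, h2, map_add, map_add]; abel
  | tmul u v => rw [Tfst_tmul, Tfst_tmul, Tfst_tmul, map_add, LinearMap.add_apply,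
      add_tmul, map_add]

lemma Tfst_smul_fst (r : ℂ) (c : A2) (t : A2 ⊗[ℂ] A2) :
    Tfst B (r • c) t = r • Tfst B c t := by
  induction t using TensorProduct.induction_on with
  | zero => simp
  | add t₁ t₂ h1 h2 => rw [map_add, h1, h2, map_add, smul_add]
  | tmul u v => rw [Tfst_tmul, Tfst_tmul, map_smul, LinearMap.smul_apply,
      ← smul_tmul', map_smul]

lemma Jex_add_c (a b c c' : A2) :
    Jex B a b (c + c') = Jex B a b c + Jex B a b c' := by
  unfold Jex
  simp only [map_add, LinearMap.add_apply, Tfst_add_fst B c c']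
  abel

lemma Jex_smul_c (r : ℂ) (a b c : A2) :
    Jex B a b (r • c) = r • Jex B a b c := by
  unfold Jex
  simp only [map_smul, LinearMap.smul_apply, Tfst_smul_fst B r c, smul_add]

include hder hskew in
lemma Jex_one (a b : A2) : Jex B a b 1 = 0 := by
  unfold Jex
  rw [B_one B hder, one_B B hder hskew, map_zero, map_zero, map_zero]
  have h3 : Tfst B (1:A2) (B a b) = 0 := by
    induction (B a b) using TensorProduct.induction_on with
    | zero => simp
    | add t₁ t₂ h1 h2 => rw [map_add, h1, h2, add_zero]
    | tmul u v => rw [Tfst_tmul, one_B B hder hskew, zero_tmul, map_zero]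
  rw [h3, map_zero, map_zero]
  simp

lemma Jex_cyc (a b c : A2) : Jex B a b c = cyc (Jex B b c a) := by
  unfold Jex
  rw [map_add, map_add, cyc3]
  abel

end JexProps

section Jder

variable (B : A2 →ₗ[ℂ] A2 →ₗ[ℂ] A2 ⊗[ℂ] A2)
variable (hder : ∀ a b c : A2, B a (b * c)
      = (b ⊗ₜ[ℂ] (1 : A2)) * B a c + B a b * ((1 : A2) ⊗ₜ[ℂ] c))
variable (hskew : ∀ a b : A2, B a b = - (TensorProduct.comm ℂ A2 A2) (B b a))

include hder hskew in
lemma Jder (a b c d : A2) :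
    Jex B a b (c * d)
      = (c ⊗ₜ[ℂ] ((1:A2) ⊗ₜ[ℂ] (1:A2))) * Jex B a b d
        + Jex B a b c * ((1:A2) ⊗ₜ[ℂ] ((1:A2) ⊗ₜ[ℂ] d)) := by
  have T1 : Tfst B a (B b (c * d))
      = (c ⊗ₜ[ℂ] ((1:A2) ⊗ₜ[ℂ] (1:A2))) * Tfst B a (B b d) + Kmap (B a c) (B b d)
        + Tfst B a (B b c) * ((1:A2) ⊗ₜ[ℂ] ((1:A2) ⊗ₜ[ℂ] d)) := by
    rw [hder b c d, map_add, E2 B hder a c (B b d), E1 B a d (B b c)]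
  have T2 : cyc (Tfst B b (B (c * d) a))
      = (c ⊗ₜ[ℂ] ((1:A2) ⊗ₜ[ℂ] (1:A2))) * cyc (Tfst B b (B d a))
        - Kmap (B a c) (B b d)
        + cyc (Tfst B b (B c a)) * ((1:A2) ⊗ₜ[ℂ] ((1:A2) ⊗ₜ[ℂ] d)) := by
    rw [D2 B hder hskew c d a, map_add, E3 B b c (B d a), E4 B hder b d (B c a),
      map_add, map_add, cyc_mul, cyc_mul, E6]
    have hc : (TensorProduct.comm ℂ A2 A2) (B c a) = - B a c := by
      rw [hskew a c, neg_neg]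
    rw [hc, Kmap_neg]
    simp only [cyc_tmul]
    abel
  have T3 : cyc (cyc (Tfst B (c * d) (B a b)))
      = (c ⊗ₜ[ℂ] ((1:A2) ⊗ₜ[ℂ] (1:A2))) * cyc (cyc (Tfst B d (B a b)))
        + cyc (cyc (Tfst B c (B a b))) * ((1:A2) ⊗ₜ[ℂ] ((1:A2) ⊗ₜ[ℂ] d)) := by
    rw [E5 B hder hskew c d (B a b), map_add, map_add, cyc_mul, cyc_mul, cyc_mul, cyc_mul]
    simp only [cyc_tmul]
  show Tfst B a (B b (c * d)) + cyc (Tfst B b (B (c * d) a))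
      + cyc (cyc (Tfst B (c * d) (B a b))) = _
  rw [T1, T2, T3]
  show _ = (c ⊗ₜ[ℂ] ((1:A2) ⊗ₜ[ℂ] (1:A2)))
      * (Tfst B a (B b d) + cyc (Tfst B b (B d a)) + cyc (cyc (Tfst B d (B a b))))
    + (Tfst B a (B b c) + cyc (Tfst B b (B c a)) + cyc (cyc (Tfst B c (B a b))))
      * ((1:A2) ⊗ₜ[ℂ] ((1:A2) ⊗ₜ[ℂ] d))
  simp only [mul_add, add_mul]
  abel

end Jder

lemma neg_tmul2 (x : A2 ⊗[ℂ] A2) (v : A2) :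
    TensorProduct.assoc ℂ A2 A2 A2 ((@Neg.neg (A2 ⊗[ℂ] A2) TensorProduct.neg x) ⊗ₜ[ℂ] v) = -(TensorProduct.assoc ℂ A2 A2 A2 (x ⊗ₜ[ℂ] v)) :=
  by rw [← map_neg]; exact congrArg _ (neg_tmul x v)

lemma Jgen (B : A2 →ₗ[ℂ] A2 →ₗ[ℂ] A2 ⊗[ℂ] A2)
    (hxx : B Xg Xg = 0) (hyy : B Yg Yg = 0)
    (hxy : B Xg Yg = Xg ⊗ₜ[ℂ] Xg)
    (hyx : B Yg Xg = - (Xg ⊗ₜ[ℂ] Xg)) :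
    ∀ i j k : Fin 2,
      Jex B (FreeAlgebra.ι ℂ i) (FreeAlgebra.ι ℂ j) (FreeAlgebra.ι ℂ k) = 0 := by
  have h0 : FreeAlgebra.ι ℂ (0 : Fin 2) = Xg := rfl
  have h1 : FreeAlgebra.ι ℂ (1 : Fin 2) = Yg := rfl
  intro i j k
  fin_cases i <;> fin_cases j <;> fin_cases k <;>
    simp only [Fin.zero_eta, Fin.mk_one, h0, h1, Jex, hxx, hyy, hxy, hyx, map_zero,
      map_neg, Tfst_tmul, TensorProduct.assoc_tmul, cyc_tmul, neg_tmul, tmul_neg,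
      add_zero, zero_add, neg_neg] <;>
    first
    | (erw [neg_tmul2]; dsimp only; simp only [TensorProduct.assoc_tmul, map_neg, cyc_tmul, neg_neg]; abel)
    | abel

/-- The double bracket on `ℂ⟨x,y⟩` with `⟪x,y⟫ = x⊗x`, `⟪y,x⟫ = −x⊗x`,
`⟪x,x⟫ = ⟪y,y⟫ = 0` satisfies the double Jacobi identity. -/
theorem stmt_2 (B : A2 →ₗ[ℂ] A2 →ₗ[ℂ] A2 ⊗[ℂ] A2)
    (hder : ∀ a b c : A2, B a (b * c)
      = (b ⊗ₜ[ℂ] (1 : A2)) * B a c + B a b * ((1 : A2) ⊗ₜ[ℂ] c))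
    (hskew : ∀ a b : A2, B a b = - (TensorProduct.comm ℂ A2 A2) (B b a))
    (hxx : B Xg Xg = 0) (hyy : B Yg Yg = 0)
    (hxy : B Xg Yg = Xg ⊗ₜ[ℂ] Xg)
    (hyx : B Yg Xg = - (Xg ⊗ₜ[ℂ] Xg)) :
    ∀ a b c : A2,
      Tfst B a (B b c) + cyc (Tfst B b (B c a)) + cyc (cyc (Tfst B c (B a b))) = 0 := by
  have key : ∀ a b : A2, (∀ k : Fin 2, Jex B a b (FreeAlgebra.ι ℂ k) = 0) →
      ∀ c, Jex B a b c = 0 := by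
    intro a b h c
    induction c using FreeAlgebra.induction with
    | grade0 r =>
        rw [show (algebraMap ℂ A2) r = r • (1:A2) from Algebra.algebraMap_eq_smul_one r,
          Jex_smul_c, Jex_one B hder hskew, smul_zero]
    | grade1 i => exact h i
    | mul x y hx hy =>
        rw [Jder B hder hskew, hx, hy, mul_zero, zero_mul, add_zero]
    | add x y hx hy => rw [Jex_add_c, hx, hy, add_zero]
  have hgen := Jgen B hxx hyy hxy hyx
  have s1 : ∀ (i j : Fin 2) (c : A2),
      Jex B (FreeAlgebra.ι ℂ i) (FreeAlgebra.ι ℂ j) c = 0 :=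
    fun i j => key _ _ (hgen i j)
  have s2 : ∀ (i : Fin 2) (b c : A2), Jex B (FreeAlgebra.ι ℂ i) b c = 0 := by
    intro i b c
    refine key _ _ (fun k => ?_) c
    rw [Jex_cyc, Jex_cyc, s1 k i b, map_zero, map_zero]
  intro a b c
  have final : Jex B a b c = 0 := by
    refine key a b (fun k => ?_) c
    rw [Jex_cyc, Jex_cyc, s2 k a b, map_zero, map_zero]
  exact final

end
end

section
/- In the free algebra ℂ⟨x,y⟩, the centralizer of x is ℂ[x]: if g ∈ ℂ⟨x,y⟩ satisfies gx = xg, then g is a polynomial in x alone. -/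
open MonoidAlgebra FreeMonoid

local notation "M" => MonoidAlgebra ℂ (FreeMonoid (Fin 2))
local notation "Xc" => MonoidAlgebra.single (FreeMonoid.of (0 : Fin 2)) (1 : ℂ)

/-- Any list over `Fin 2` is all zeros, or ends in `1` followed by zeros. -/
lemma aux_decomp (l : List (Fin 2)) :
    l = List.replicate l.length 0 ∨ ∃ a k, l = a ++ 1 :: List.replicate k 0 := by
  induction l using List.reverseRecOn with
  | nil => left; rfl
  | append_singleton l x ih =>
    have hx : x = 0 ∨ x = 1 := by omega
    rcases hx with rfl | rfl
    · rcases ih with h | ⟨a, k, h⟩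
      · left
        rw [h, List.length_append, List.length_replicate]
        simp [List.replicate_succ' (n := l.length)]
      · right
        refine ⟨a, k + 1, ?_⟩
        rw [h, List.replicate_succ' (n := k)]
        simp
    · right
      exact ⟨l, 0, by simp⟩

lemma aux_shift (f : M) (hf : f * Xc = Xc * f) (u : FreeMonoid (Fin 2)) :
    f.coeff u = (f * Xc).coeff (FreeMonoid.of 0 * u) := by
  rw [hf]
  rw [MonoidAlgebra.coeff_single_mul_eq_mul_coeff (x := f) (m₂ := u)
    (H := fun a _ => by constructor <;> intro hh
                        · exact mul_left_cancel hh
                        · rw [hh])]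
  rw [one_mul]

/-- If a word ends in a nonzero letter, its coefficient in `f` vanishes. -/
lemma aux_end_one (f : M) (hf : f * Xc = Xc * f) (a : List (Fin 2)) :
    f.coeff (FreeMonoid.ofList (a ++ [1])) = 0 := by
  rw [aux_shift f hf]
  apply MonoidAlgebra.mul_single_apply_of_not_exists_mul
  rintro ⟨d, hd⟩
  have : (FreeMonoid.of (0 : Fin 2) * FreeMonoid.ofList (a ++ [1])).toList
      = (d * FreeMonoid.of (0 : Fin 2)).toList := by rw [hd]
  rw [FreeMonoid.toList_mul, FreeMonoid.toList_mul, FreeMonoid.toList_of,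
    FreeMonoid.toList_ofList] at this
  have h1 := congrArg List.getLast? this
  rw [show [(0:Fin 2)] ++ (a ++ [1]) = ((0 :: a) ++ [1]) from by simp,
    List.getLast?_concat, List.getLast?_concat] at h1
  simp at h1

lemma aux_rotate (f : M) (hf : f * Xc = Xc * f) (w : List (Fin 2)) :
    f.coeff (FreeMonoid.ofList (w ++ [0])) = f.coeff (FreeMonoid.ofList (0 :: w)) := by
  rw [aux_shift f hf]
  have he : FreeMonoid.of (0 : Fin 2) * FreeMonoid.ofList (w ++ [0])
      = FreeMonoid.ofList (0 :: w) * FreeMonoid.of 0 := rfl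
  rw [he, MonoidAlgebra.coeff_mul_single_eq_coeff_mul (x := f) (m₂ := FreeMonoid.ofList (0 :: w))
    (H := fun a _ => by constructor <;> intro hh
                        · exact mul_right_cancel hh
                        · rw [hh]),
    mul_one]

lemma aux_vanish (f : M) (hf : f * Xc = Xc * f) :
    ∀ (k : ℕ) (a : List (Fin 2)), f.coeff (FreeMonoid.ofList (a ++ 1 :: List.replicate k 0)) = 0 := by
  intro k
  induction k with
  | zero => intro a; simpa using aux_end_one f hf a
  | succ k ih =>
    intro a
    have h1 : a ++ 1 :: List.replicate (k+1) 0
        = (a ++ 1 :: List.replicate k 0) ++ [(0 : Fin 2)] := by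
      rw [List.replicate_succ' (n := k)]; simp
    rw [h1, aux_rotate f hf]
    have h2 : (0 : Fin 2) :: (a ++ 1 :: List.replicate k 0)
        = (0 :: a) ++ 1 :: List.replicate k 0 := by simp
    rw [h2, ih]

lemma aux_pow (n : ℕ) :
    MonoidAlgebra.single (FreeMonoid.ofList (List.replicate n (0 : Fin 2))) (1 : ℂ)
      = (Xc : M) ^ n := by
  induction n with
  | zero => rfl
  | succ n ih =>
    rw [List.replicate_succ, FreeMonoid.ofList_cons, pow_succ']
    rw [← ih, MonoidAlgebra.single_mul_single, one_mul]

/-- In the free algebra `ℂ⟨x,y⟩`, the centralizer of `x` is `ℂ[x]`. -/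
theorem stmt_7 (g : FreeAlgebra ℂ (Fin 2))
    (h : g * FreeAlgebra.ι ℂ 0 = FreeAlgebra.ι ℂ 0 * g) :
    g ∈ Algebra.adjoin ℂ ({FreeAlgebra.ι ℂ 0} : Set (FreeAlgebra ℂ (Fin 2))) := by
  set e := FreeAlgebra.equivMonoidAlgebraFreeMonoid (R := ℂ) (X := Fin 2) with he
  have hι : e (FreeAlgebra.ι ℂ 0) = (Xc : M) := by
    simp [he, FreeAlgebra.equivMonoidAlgebraFreeMonoid, MonoidAlgebra.of_apply]
  clear_value e
  set f : M := e g with hfdef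
  clear_value f
  have hf : f * Xc = Xc * f := by
    rw [← hι, hfdef, ← map_mul, ← map_mul, h]
  have hmem : f ∈ Algebra.adjoin ℂ ({(Xc : M)} : Set M) := by
    have hsum : f = f.coeff.sum (fun w c => MonoidAlgebra.single w c) := (MonoidAlgebra.sum_coeff_single f).symm
    rw [hsum]
    apply Subalgebra.sum_mem
    intro w hw
    rcases aux_decomp w.toList with hd | ⟨a, k, hd⟩
    · have hw' : w = FreeMonoid.ofList (List.replicate w.toList.length 0) := by
        conv_lhs => rw [← FreeMonoid.ofList_toList w]
        rw [← hd]
      show MonoidAlgebra.single w (f.coeff w) ∈ _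
      have key : MonoidAlgebra.single w (f.coeff w)
          = MonoidAlgebra.single (1 : FreeMonoid (Fin 2)) (f.coeff w) * (Xc : M) ^ w.toList.length := by
        rw [← aux_pow, MonoidAlgebra.single_mul_single, one_mul, mul_one, ← hw']
      rw [key]
      have halg : MonoidAlgebra.single (1 : FreeMonoid (Fin 2)) (f.coeff w)
          = algebraMap ℂ M (f.coeff w) := by
        rw [MonoidAlgebra.coe_algebraMap]; rfl
      rw [halg]
      refine mul_mem ?_ ?_
      · exact Subalgebra.algebraMap_mem _ _
      · exact pow_mem (Algebra.subset_adjoin (Set.mem_singleton _)) _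
    · exfalso
      have hw0 : f.coeff w ≠ 0 := Finsupp.mem_support_iff.mp hw
      apply hw0
      have hw' : w = FreeMonoid.ofList (a ++ 1 :: List.replicate k 0) := by
        conv_lhs => rw [← FreeMonoid.ofList_toList w]
        rw [← hd]
      show f.coeff w = 0
      rw [hw']
      exact aux_vanish f hf k a
  have hmap := Algebra.adjoin_image (R := ℂ) (f := e.symm.toAlgHom)
    (s := ({(Xc : M)} : Set M))
  have himg : e.symm.toAlgHom '' ({(Xc : M)} : Set M)
      = ({FreeAlgebra.ι ℂ 0} : Set (FreeAlgebra ℂ (Fin 2))) := by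
    rw [Set.image_singleton]
    congr 1
    exact (AlgEquiv.symm_apply_eq e).mpr hι.symm
  have : e.symm f ∈ Algebra.adjoin ℂ (e.symm.toAlgHom '' ({(Xc : M)} : Set M)) := by
    rw [hmap]
    exact ⟨f, hmem, rfl⟩
  rw [himg] at this
  simpa [hfdef] using this
end
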